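/- For every integer n ≥ 2, there exists an integer r with 1 < r ≤ max(3, ⌈(log₂ n)⁵⌉) such that the multiplicative order of n modulo r exceeds ⌊log₂ n⌋². -/

import Mathlib

open Finset


lemma beta_sum (k : ℕ) : ∀ m : ℕ, ∑ j ∈ range (k+1), (-1:ℚ)^j * ((k.choose j : ℕ) : ℚ) / ((m:ℚ)+j+1)
    = ((m.factorial * k.factorial : ℕ) : ℚ) / ((m+k+1).factorial : ℕ) := by
  induction k with
  | zero =>
    intro m
    have hm : ((m:ℚ)+1) ≠ 0 := by positivity
    have hf : ((m.factorial : ℕ):ℚ) ≠ 0 := by positivity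
    simp only [range_one, sum_singleton, Nat.choose_self, pow_zero, Nat.cast_one, one_mul,
      Nat.cast_zero, zero_add, Nat.factorial_one, mul_one, Nat.factorial_succ]
    push_cast
    field_simp
    simp
  | succ k ih =>
    intro m
    have h1 : ∑ j ∈ range (k+2), (-1:ℚ)^j * (((k+1).choose j : ℕ) : ℚ) / ((m:ℚ)+j+1)
        = (∑ j ∈ range (k+1), (-1:ℚ)^j * ((k.choose j : ℕ):ℚ) / ((m:ℚ)+j+1))
          - ∑ j ∈ range (k+1), (-1:ℚ)^j * ((k.choose j : ℕ):ℚ) / ((m:ℚ)+1+j+1) := by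
      rw [Finset.sum_range_succ' (fun j => (-1:ℚ)^j * (((k+1).choose j : ℕ):ℚ) / ((m:ℚ)+j+1)) (k+1)]
      have e1 : ∀ j ∈ range (k+1),
          (-1:ℚ)^(j+1) * (((k+1).choose (j+1) : ℕ):ℚ) / ((m:ℚ)+(j+1:ℕ)+1)
          = (-1:ℚ)^(j+1) * ((k.choose (j+1) : ℕ):ℚ) / ((m:ℚ)+(j:ℚ)+2)
            - (-1:ℚ)^j * ((k.choose j : ℕ):ℚ) / ((m:ℚ)+1+j+1) := by
        intro j hj
        rw [Nat.choose_succ_succ]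
        push_cast
        ring
      rw [Finset.sum_congr rfl e1, Finset.sum_sub_distrib]
      have e2 : ∑ j ∈ range (k+1), (-1:ℚ)^(j+1) * ((k.choose (j+1) : ℕ):ℚ) / ((m:ℚ)+(j:ℚ)+2)
          = ∑ j ∈ range k, (-1:ℚ)^(j+1) * ((k.choose (j+1) : ℕ):ℚ) / ((m:ℚ)+(j:ℚ)+2) := by
        rw [Finset.sum_range_succ, Nat.choose_succ_self]
        simp
      rw [e2, Finset.sum_range_succ' (fun j => (-1:ℚ)^j * ((k.choose j : ℕ):ℚ) / ((m:ℚ)+j+1)) k]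
      have e3 : ∀ j ∈ range k, (-1:ℚ)^(j+1) * ((k.choose (j+1) : ℕ):ℚ) / ((m:ℚ)+(j+1:ℕ)+1)
          = (-1:ℚ)^(j+1) * ((k.choose (j+1) : ℕ):ℚ) / ((m:ℚ)+(j:ℚ)+2) := by
        intro j hj; push_cast; ring_nf
      rw [Finset.sum_congr rfl e3]
      simp only [Nat.choose_zero_right, Nat.cast_ofNat, Nat.cast_zero, Nat.cast_one]
      push_cast
      ring
    rw [h1, ih m]
    have ihm1 := ih (m+1)
    push_cast at ihm1 ⊢
    rw [ihm1]
    have hf1 : (((m+(k+1)+1).factorial : ℕ) : ℚ) = ((m:ℚ)+k+2) * ((m+k+1).factorial : ℕ) := by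
      have : m+(k+1)+1 = (m+k+1)+1 := by ring
      rw [this, Nat.factorial_succ]; push_cast; ring
    have hf2 : ((((m+1)+k+1).factorial : ℕ) : ℚ) = ((m:ℚ)+k+2) * ((m+k+1).factorial : ℕ) := by
      have : (m+1)+k+1 = (m+k+1)+1 := by ring
      rw [this, Nat.factorial_succ]; push_cast; ring
    have hf3 : (((k+1).factorial : ℕ) : ℚ) = ((k:ℚ)+1) * (k.factorial : ℕ) := by
      rw [Nat.factorial_succ]; push_cast; ring
    have hf4 : (((m+1).factorial : ℕ) : ℚ) = ((m:ℚ)+1) * (m.factorial : ℕ) := by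
      rw [Nat.factorial_succ]; push_cast; ring
    push_cast at hf1 hf2 hf3 hf4
    rw [hf1, hf2, hf3, hf4]
    have h4 : ((m+k+1).factorial : ℚ) ≠ 0 := by
      have := Nat.factorial_pos (m+k+1); positivity
    have h5 : ((m:ℚ)+k+2) ≠ 0 := by positivity
    field_simp
    ring

lemma nair (n m : ℕ) (hm : m ≤ n) :
    (n+1) * n.choose m ∣ Finset.lcm (Finset.Icc 1 (n+1)) id := by
  set L := Finset.lcm (Finset.Icc 1 (n+1)) id with hLdef
  have hL : ∀ j ∈ range (n-m+1), (m+j+1) ∣ L := by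
    intro j hj
    simp only [mem_range] at hj
    have : m+j+1 ∈ Finset.Icc 1 (n+1) := by
      rw [mem_Icc]; omega
    exact Finset.dvd_lcm this
  have hterm : ∀ j ∈ range (n-m+1), (((L/(m+j+1) : ℕ)) : ℚ) = (L:ℚ)/((m:ℚ)+(j:ℚ)+1) := by
    intro j hj
    rw [Nat.cast_div (hL j hj) (by positivity)]
    push_cast
    ring
  set z : ℤ := ∑ j ∈ range (n-m+1), (-1:ℤ)^j * ((n-m).choose j : ℕ) * ((L/(m+j+1) : ℕ) : ℤ) with hzdef
  have key : (z : ℚ) = L * (((m.factorial * (n-m).factorial : ℕ):ℚ) / (((m+(n-m)+1).factorial : ℕ):ℚ)) := by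
    rw [← beta_sum (n-m) m, Finset.mul_sum, hzdef]
    rw [Int.cast_sum]
    apply Finset.sum_congr rfl
    intro j hj
    rw [Int.cast_mul, Int.cast_mul, Int.cast_pow, Int.cast_neg, Int.cast_one,
      Int.cast_natCast, Int.cast_natCast, hterm j hj]
    ring
  have hnat : ((n+1) * n.choose m) * (m.factorial * (n-m).factorial) = (n+1).factorial := by
    rw [Nat.factorial_succ, ← Nat.choose_mul_factorial_mul_factorial hm]
    ring
  have hm' : m + (n-m) + 1 = n + 1 := by omega
  have hfpos : (((n+1).factorial : ℕ) : ℚ) ≠ 0 := by positivity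
  have hc : (((n+1) * n.choose m : ℕ) : ℚ) * ((m.factorial * (n-m).factorial : ℕ) : ℚ)
      = (((n+1).factorial : ℕ) : ℚ) := by exact_mod_cast congrArg (Nat.cast (R := ℚ)) hnat
  have hq : (z : ℚ) * (((n+1) * n.choose m : ℕ) : ℚ) = (L : ℚ) := by
    rw [key, hm']
    field_simp
    push_cast at hc ⊢
    linear_combination (L:ℚ) * hc
  have hz' : ((L:ℕ) : ℤ) = (((n+1) * n.choose m : ℕ) : ℤ) * z := by
    exact_mod_cast (by linear_combination -hq : (L:ℚ) = (((n+1) * n.choose m : ℕ) : ℚ) * (z:ℚ))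
  have : (((n+1) * n.choose m : ℕ) : ℤ) ∣ ((L:ℕ) : ℤ) := ⟨z, hz'⟩
  exact_mod_cast this

lemma lcm_lower (n : ℕ) : 2^n ≤ Finset.lcm (Finset.Icc 1 (n+1)) id := by
  have hd := nair n (n/2) (Nat.div_le_self n 2)
  have hL0 : Finset.lcm (Finset.Icc 1 (n+1)) id ≠ 0 := by
    intro h0
    rw [Finset.lcm_eq_zero_iff] at h0
    obtain ⟨x, hx, hx0⟩ := h0
    simp only [mem_coe, mem_Icc, id_eq] at hx hx0
    omega
  have hle : (n+1) * n.choose (n/2) ≤ Finset.lcm (Finset.Icc 1 (n+1)) id :=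
    Nat.le_of_dvd (Nat.pos_of_ne_zero hL0) hd
  have h2 : 2^n ≤ (n+1) * n.choose (n/2) := by
    calc 2^n = ∑ i ∈ range (n+1), n.choose i := (Nat.sum_range_choose n).symm
    _ ≤ (range (n+1)).card • n.choose (n/2) :=
        Finset.sum_le_card_nsmul _ _ _ (fun i _ => Nat.choose_le_middle i n)
    _ = (n+1) * n.choose (n/2) := by simp [Finset.card_range]
  omega

lemma gauss_icc (K : ℕ) : 2 * (∑ i ∈ Finset.Icc 1 K, i) = K * (K+1) := by
  induction K with
  | zero => decide
  | succ K ih =>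
    rw [Finset.sum_Icc_succ_top (by omega)]
    calc 2 * ((∑ i ∈ Finset.Icc 1 K, i) + (K+1)) = 2 * (∑ i ∈ Finset.Icc 1 K, i) + 2*(K+1) := by ring
    _ = K*(K+1) + 2*(K+1) := by rw [ih]
    _ = (K+1)*(K+1+1) := by ring

lemma succ_le_two_pow (k : ℕ) (hk : 3 ≤ k) : k + 1 ≤ 2^(k-1) := by
  obtain ⟨j, rfl⟩ : ∃ j, k = j + 3 := ⟨k - 3, by omega⟩
  induction j with
  | zero => norm_num
  | succ j ih =>
    have h2 : j + 3 + 1 ≤ 2^(j+3-1) := ih (by omega)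
    have : (2:ℕ)^(j+1+3-1) = 2 * 2^(j+3-1) := by
      rw [show j+1+3-1 = (j+3-1)+1 by omega, pow_succ']
    omega

lemma poly_ineq (k : ℕ) (hk : 3 ≤ k) : k^4 + k^3 + 11*k^2 + 10*k + 2 ≤ k^5 := by
  obtain ⟨j, rfl⟩ : ∃ j, k = j + 3 := ⟨k - 3, by omega⟩
  ring_nf
  nlinarith [pow_pos (Nat.succ_pos j) 5, sq_nonneg j, pow_nonneg (Nat.zero_le j) 3, pow_nonneg (Nat.zero_le j) 4, pow_nonneg (Nat.zero_le j) 5]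

theorem exists_order_gt (n : ℕ) (hn : 2 ≤ n) :
    ∃ r : ℕ, 1 < r ∧ r ≤ max 3 ⌈(Real.logb 2 n) ^ 5⌉₊ ∧ Nat.Coprime n r ∧
      (Nat.log 2 n) ^ 2 < orderOf (n : ZMod r) := by
  by_cases hn8 : n < 8
  · have hlog2 : (0:ℝ) < Real.log 2 := Real.log_pos (by norm_num)
    have hlogb4 : Real.logb 2 4 = 2 := by
      rw [show (4:ℝ) = 2^(2:ℕ) by norm_num, Real.logb_pow, Real.logb_self_eq_one (by norm_num)]
      norm_num
    have hb47 : ∀ m : ℕ, 4 ≤ m → (11:ℕ) ≤ max 3 ⌈(Real.logb 2 m) ^ 5⌉₊ := by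
      intro m hm
      refine le_trans ?_ (le_max_right _ _)
      have h2m : (2:ℝ) ≤ Real.logb 2 m :=
        calc (2:ℝ) = Real.logb 2 4 := hlogb4.symm
        _ ≤ Real.logb 2 (m:ℝ) := Real.logb_le_logb_of_le (b:=2) (x:=4) (y:=(m:ℝ)) (by norm_num) (by norm_num) (by exact_mod_cast hm)
      have h10 : (10:ℝ) < (Real.logb 2 (m:ℝ))^5 := by
        calc (10:ℝ) < 2^5 := by norm_num
        _ ≤ _ := pow_le_pow_left₀ (by norm_num) h2m 5
      have h11 : (10:ℕ) < ⌈(Real.logb 2 (m:ℝ))^5⌉₊ := Nat.lt_ceil.mpr (by exact_mod_cast h10)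
      omega
    interval_cases n
    · -- n = 2
      refine ⟨3, by norm_num, le_max_left _ _, by decide, ?_⟩
      have hlog : Nat.log 2 2 = 1 := Nat.log_eq_of_pow_le_of_lt_pow (by norm_num) (by norm_num)
      rw [hlog]
      have h2 : orderOf ((2:ℕ) : ZMod 3) = 2 :=
        (orderOf_eq_iff (by norm_num)).mpr ⟨by decide, by decide⟩
      rw [h2]; norm_num
    · -- n = 3
      have hb : (5:ℕ) ≤ max 3 ⌈(Real.logb 2 ((3:ℕ):ℝ)) ^ 5⌉₊ := by
        refine le_trans ?_ (le_max_right _ _)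
        have h23 : (3/2 : ℝ) ≤ Real.logb 2 ((3:ℕ):ℝ) := by
          have h89 : Real.log 8 ≤ Real.log 9 := Real.log_le_log (by norm_num) (by norm_num)
          have l8 : Real.log 8 = 3 * Real.log 2 := by
            rw [show (8:ℝ) = 2^(3:ℕ) by norm_num, Real.log_pow]; push_cast; ring
          have l9 : Real.log 9 = 2 * Real.log ((3:ℕ):ℝ) := by
            rw [show (9:ℝ) = ((3:ℕ):ℝ)^(2:ℕ) by norm_num, Real.log_pow]; push_cast; ring
          rw [Real.logb, le_div_iff₀ hlog2]
          push_cast at l9 ⊢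
          nlinarith
        have h4 : (4:ℝ) < (Real.logb 2 ((3:ℕ):ℝ)) ^ 5 := by
          calc (4:ℝ) < (3/2)^5 := by norm_num
          _ ≤ _ := pow_le_pow_left₀ (by norm_num) h23 5
        have h5 : (4:ℕ) < ⌈(Real.logb 2 ((3:ℕ):ℝ))^5⌉₊ := Nat.lt_ceil.mpr (by exact_mod_cast h4)
        omega
      refine ⟨5, by norm_num, hb, by decide, ?_⟩
      have hlog : Nat.log 2 3 = 1 := Nat.log_eq_of_pow_le_of_lt_pow (by norm_num) (by norm_num)
      rw [hlog]
      have h2 : orderOf ((3:ℕ) : ZMod 5) = 4 :=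
        (orderOf_eq_iff (by norm_num)).mpr ⟨by decide, by decide⟩
      rw [h2]; norm_num
    · -- n = 4
      refine ⟨11, by norm_num, hb47 4 (by norm_num), by decide, ?_⟩
      have hlog : Nat.log 2 4 = 2 := Nat.log_eq_of_pow_le_of_lt_pow (by norm_num) (by norm_num)
      rw [hlog]
      have h2 : orderOf ((4:ℕ) : ZMod 11) = 5 :=
        (orderOf_eq_iff (by norm_num)).mpr ⟨by decide, by decide⟩
      rw [h2]; norm_num
    · -- n = 5
      refine ⟨11, by norm_num, hb47 5 (by norm_num), by decide, ?_⟩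
      have hlog : Nat.log 2 5 = 2 := Nat.log_eq_of_pow_le_of_lt_pow (by norm_num) (by norm_num)
      rw [hlog]
      have h2 : orderOf ((5:ℕ) : ZMod 11) = 5 :=
        (orderOf_eq_iff (by norm_num)).mpr ⟨by decide, by decide⟩
      rw [h2]; norm_num
    · -- n = 6
      refine ⟨11, by norm_num, hb47 6 (by norm_num), by decide, ?_⟩
      have hlog : Nat.log 2 6 = 2 := Nat.log_eq_of_pow_le_of_lt_pow (by norm_num) (by norm_num)
      rw [hlog]
      have h2 : orderOf ((6:ℕ) : ZMod 11) = 10 :=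
        (orderOf_eq_iff (by norm_num)).mpr ⟨by decide, by decide⟩
      rw [h2]; norm_num
    · -- n = 7
      refine ⟨11, by norm_num, hb47 7 (by norm_num), by decide, ?_⟩
      have hlog : Nat.log 2 7 = 2 := Nat.log_eq_of_pow_le_of_lt_pow (by norm_num) (by norm_num)
      rw [hlog]
      have h2 : orderOf ((7:ℕ) : ZMod 11) = 10 :=
        (orderOf_eq_iff (by norm_num)).mpr ⟨by decide, by decide⟩
      rw [h2]; norm_num

  · push_neg at hn8
    set k := Nat.log 2 n with hkdef
    set B := max 3 ⌈(Real.logb 2 n) ^ 5⌉₊ with hBdef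
    have hk3 : 3 ≤ k := by
      have h8 : Nat.log 2 8 ≤ k := Nat.log_mono_right hn8
      have : Nat.log 2 8 = 3 := Nat.log_eq_of_pow_le_of_lt_pow (by norm_num) (by norm_num)
      omega
    have hkL : (k : ℝ) ≤ Real.logb 2 n := Real.natLog_le_logb n 2
    have hLk : Real.logb 2 n < (k:ℝ) + 1 := by
      have hlt : (n:ℝ) < (2:ℝ)^(k+1) := by
        exact_mod_cast Nat.lt_pow_succ_log_self (by norm_num) n
      have h0n : (0:ℝ) < n := by positivity
      calc Real.logb 2 n < Real.logb 2 ((2:ℝ)^(k+1)) := Real.logb_lt_logb (by norm_num) h0n hlt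
      _ = ((k:ℝ)+1) * Real.logb 2 2 := by rw [Real.logb_pow]; push_cast; ring
      _ = (k:ℝ)+1 := by rw [Real.logb_self_eq_one (by norm_num)]; ring
    have hB1 : k^5 ≤ B := by
      have h1 : ((k^5 : ℕ) : ℝ) ≤ ((⌈(Real.logb 2 n) ^ 5⌉₊ : ℕ) : ℝ) := by
        push_cast
        calc (k:ℝ)^5 ≤ (Real.logb 2 n)^5 := pow_le_pow_left₀ (by positivity) hkL 5
        _ ≤ _ := Nat.le_ceil _
      have := Nat.cast_le (α := ℝ).mp h1
      exact this.trans (le_max_right _ _)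
    have hB2 : B ≤ (k+1)^5 := by
      apply max_le
      · exact le_trans (by omega) (Nat.le_self_pow (by norm_num) (k+1))
      · rw [Nat.ceil_le]
        push_cast
        exact pow_le_pow_left₀ (Real.logb_nonneg (by norm_num) (by exact_mod_cast by omega : (1:ℝ) ≤ n)) hLk.le 5
    set E := Nat.log 2 B with hEdef
    have hE : E ≤ 5*k := by
      have h1 : B ≤ 2^(5*(k-1)) := by
        calc B ≤ (k+1)^5 := hB2
        _ ≤ (2^(k-1))^5 := Nat.pow_le_pow_left (succ_le_two_pow k hk3) 5
        _ = 2^(5*(k-1)) := by rw [← pow_mul, mul_comm]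
      calc E ≤ Nat.log 2 (2^(5*(k-1))) := Nat.log_mono_right h1
      _ = 5*(k-1) := Nat.log_pow (by norm_num) _
      _ ≤ 5*k := by omega
    set K := k^2 with hKdef
    set S := ∑ i ∈ Finset.Icc 1 K, i with hSdef
    have hS : 2*S = K*(K+1) := gauss_icc K
    set P := ∏ i ∈ Finset.Icc 1 K, (n^i - 1) with hPdef
    set N := n^E * P with hNdef
    have hfac_pos : ∀ i ∈ Finset.Icc 1 K, 0 < n^i - 1 := by
      intro i hi
      simp only [mem_Icc] at hi
      have : 2 ≤ n^i := by
        calc 2 ≤ n := hn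
        _ = n^1 := (pow_one n).symm
        _ ≤ n^i := Nat.pow_le_pow_right (by omega) hi.1
      omega
    have hP_pos : 0 < P := Finset.prod_pos hfac_pos
    have hN_pos : 0 < N := Nat.mul_pos (pow_pos (by omega : 0 < n) E) hP_pos
    have hibound : (k+1)*(E+S)+1 ≤ B := by
      have h2 : 2*((k+1)*(E+S)+1) ≤ 2*B := by
        calc 2*((k+1)*(E+S)+1) = 2*(k+1)*E + (k+1)*(2*S) + 2 := by ring
        _ = 2*(k+1)*E + (k+1)*(k^2*(k^2+1)) + 2 := by rw [hS, hKdef]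
        _ ≤ 2*(k+1)*(5*k) + (k+1)*(k^2*(k^2+1)) + 2 := by gcongr
        _ = k^5 + (k^4 + k^3 + 11*k^2 + 10*k + 2) := by ring
        _ ≤ k^5 + k^5 := Nat.add_le_add_left (poly_ineq k hk3) _
        _ = 2*k^5 := by ring
        _ ≤ 2*B := by omega
      omega
    have hNlt : N < Finset.lcm (Finset.Icc 1 B) id := by
      have h1 : P < n^S := by
        calc P < ∏ i ∈ Finset.Icc 1 K, n^i := by
              apply Finset.prod_lt_prod_of_nonempty hfac_pos
              · intro i hi
                have := hfac_pos i hi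
                omega
              · refine Finset.nonempty_Icc.mpr ?_
                rw [hKdef]
                exact Nat.one_le_pow _ _ (by omega)
        _ = n^S := Finset.prod_pow_eq_pow_sum _ _ _
      have h2 : N < n^(E+S) := by
        rw [hNdef, pow_add]
        exact (Nat.mul_lt_mul_left (pow_pos (show 0 < n by omega) E)).mpr h1
      have h3 : n^(E+S) ≤ 2^(B-1) := by
        calc n^(E+S) ≤ (2^(k+1))^(E+S) :=
              Nat.pow_le_pow_left (Nat.lt_pow_succ_log_self (by norm_num) n).le _
        _ = 2^((k+1)*(E+S)) := by rw [← pow_mul]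
        _ ≤ 2^(B-1) := Nat.pow_le_pow_right (by norm_num) (by omega)
      have h4 : 2^(B-1) ≤ Finset.lcm (Finset.Icc 1 B) id := by
        obtain ⟨b, hb⟩ : ∃ b, B = b + 1 := ⟨B - 1, by omega⟩
        rw [hb]
        simpa using lcm_lower b
      exact h2.trans_le (h3.trans h4)
    have hex : ∃ r, 1 ≤ r ∧ r ≤ B ∧ ¬ r ∣ N := by
      by_contra hcon
      push_neg at hcon
      have hdvd : Finset.lcm (Finset.Icc 1 B) id ∣ N := by
        apply Finset.lcm_dvd
        intro b hb
        simp only [mem_Icc] at hb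
        exact hcon b hb.1 hb.2
      exact absurd hNlt (not_lt.mpr (Nat.le_of_dvd hN_pos hdvd))
    classical
    set r₀ := Nat.find hex with hr₀def
    obtain ⟨hr₀1, hr₀B, hr₀N⟩ := Nat.find_spec hex
    rw [← hr₀def] at hr₀1 hr₀B hr₀N
    have hmin : ∀ s, s < r₀ → 1 ≤ s → s ≤ B → s ∣ N := by
      intro s hs h1 h2
      by_contra hnd
      exact Nat.find_min hex hs ⟨h1, h2, hnd⟩
    have hr1 : 1 < r₀ := by
      rcases Nat.lt_or_ge 1 r₀ with h | h
      · exact h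
      · exfalso; have : r₀ = 1 := by omega
        rw [this] at hr₀N; exact hr₀N (one_dvd N)
    have hr0 : r₀ ≠ 0 := by omega
    -- coprimality
    have hcop : Nat.Coprime n r₀ := by
      by_contra hnc
      have hg1 : Nat.gcd n r₀ ≠ 1 := hnc
      obtain ⟨p, hp, hpg⟩ := Nat.exists_prime_and_dvd hg1
      have hpn : p ∣ n := hpg.trans (Nat.gcd_dvd_left n r₀)
      have hpr : p ∣ r₀ := hpg.trans (Nat.gcd_dvd_right n r₀)
      set a := r₀.factorization p with hadef
      have ha1 : 1 ≤ a := hp.factorization_pos_of_dvd hr0 hpr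
      have hpa_dvd : p^a ∣ r₀ := Nat.ordProj_dvd r₀ p
      have hp2 : 2 ≤ p := hp.two_le
      have haE : a ≤ E := by
        have h1 : p^a ≤ B := le_trans (Nat.le_of_dvd (by omega) hpa_dvd) hr₀B
        have h2 : B < 2^(E+1) := Nat.lt_pow_succ_log_self (by norm_num) B
        have h3 : (2:ℕ)^(E+1) ≤ p^(E+1) := Nat.pow_le_pow_left hp2 _
        have h4 : p^a < p^(E+1) := by omega
        have := (Nat.pow_lt_pow_iff_right (by omega)).mp h4
        omega
      have hpaN : p^a ∣ n^E :=
        (pow_dvd_pow p haE).trans (pow_dvd_pow_of_dvd hpn E)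
      set m := r₀ / p^a with hmdef
      have hm_lt : m < r₀ := by
        apply Nat.div_lt_self (by omega)
        calc 1 < 2 := one_lt_two
        _ ≤ p := hp2
        _ = p^1 := (pow_one p).symm
        _ ≤ p^a := Nat.pow_le_pow_right (by omega) ha1
      have hm_pos : 1 ≤ m := Nat.ordCompl_pos p hr0
      have hm_dvd : m ∣ N := hmin m hm_lt hm_pos (by omega)
      have hpm : ¬ p ∣ m := Nat.not_dvd_ordCompl hp hr0
      have hcpm : Nat.Coprime (p^a) m :=
        Nat.Coprime.pow_left a ((hp.coprime_iff_not_dvd).mpr hpm)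
      have hrN : r₀ ∣ N := by
        have heq : p^a * m = r₀ := Nat.ordProj_mul_ordCompl_eq_self r₀ p
        rw [← heq]
        exact Nat.Coprime.mul_dvd_of_dvd_of_dvd hcpm
          (hpaN.trans (Dvd.intro P rfl)) hm_dvd
      exact hr₀N hrN
    -- the order
    haveI : NeZero r₀ := ⟨hr0⟩
    have hu : IsUnit ((n:ℕ) : ZMod r₀) := (ZMod.isUnit_iff_coprime n r₀).mpr hcop
    have hdpos : 0 < orderOf ((n:ℕ) : ZMod r₀) := by
      rw [← IsUnit.unit_spec hu, orderOf_units]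
      exact orderOf_pos hu.unit
    refine ⟨r₀, hr1, hr₀B, hcop, ?_⟩
    by_contra hle
    push_neg at hle
    set d := orderOf ((n:ℕ) : ZMod r₀) with hddef
    have hd_mem : d ∈ Finset.Icc 1 K := by
      rw [mem_Icc]
      exact ⟨hdpos, hle⟩
    have hpow : ((n:ℕ) : ZMod r₀)^d = 1 := pow_orderOf_eq_one _
    have h1 : ((n^d : ℕ) : ZMod r₀) = 1 := by push_cast; exact hpow
    have hnd1 : 1 ≤ n^d := Nat.one_le_pow _ _ (by omega)
    have h0 : ((n^d - 1 : ℕ) : ZMod r₀) = 0 := by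
      rw [Nat.cast_sub hnd1, h1]
      simp
    rw [ZMod.natCast_eq_zero_iff] at h0
    have hrP : r₀ ∣ P := h0.trans (Finset.dvd_prod_of_mem (fun i => n^i - 1) hd_mem)
    exact hr₀N (hrP.trans (Dvd.intro_left (n^E) rfl))
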